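/- (Singular matrix perturbation, leading term) Let D̂ = F₀ + εD with F₀ symmetric and singular. Let P be the orthogonal projection onto the nullspace of F₀ and Q = I - P. Assume PᵀDP is invertible on the range of P and QᵀF₀Q is invertible on the range of Q. Let E_P = P(PᵀDP)^{-1}Pᵀ and E_Q = Q(QᵀF₀Q)^{-1}Qᵀ. Then for all sufficiently small ε > 0, D̂ is invertible and D̂^{-1} = (1/ε)E_P + (I - E_P D)E_Q(I - D E_P) + O(ε). -/

import Mathlib

open Matrix

attribute [local instance] Matrix.linftyOpNormedAddCommGroup Matrix.linftyOpNormedRing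
attribute [local instance] Matrix.linftyOpNormedSpace

set_option maxHeartbeats 1000000 in
/-- Singular matrix perturbation, leading term.  `D̂ = F₀ + εD` with `F₀`
symmetric and singular, `P` the orthogonal projection onto `ker F₀`, `Q = I - P`,
`E_P = P(PᵀDP)⁻¹Pᵀ` (encoded by its defining properties on the range of `P`) and
`E_Q = Q(QᵀF₀Q)⁻¹Qᵀ`.  Then for all sufficiently small `ε > 0`, `D̂` is
invertible and `D̂⁻¹ = (1/ε)E_P + (I - E_P D)E_Q(I - D E_P) + O(ε)`. -/
theorem stmt_5 {n : ℕ} (F₀ D P Q EP EQ : Matrix (Fin n) (Fin n) ℝ)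
    (hF₀sym : F₀.IsSymm) (hF₀sing : ¬ IsUnit F₀)
    (hPproj : P * P = P) (hPsym : Pᵀ = P) (hQ : Q = 1 - P)
    (hker : ∀ x : Fin n → ℝ, F₀ *ᵥ x = 0 ↔ P *ᵥ x = x)
    -- `EP` inverts `PᵀDP` on the range of `P`:
    (hEP₁ : EP * (Pᵀ * D * P) = P) (hEP₂ : (Pᵀ * D * P) * EP = P)
    (hEP₃ : P * EP = EP) (hEP₄ : EP * Pᵀ = EP)
    -- `EQ` inverts `QᵀF₀Q` on the range of `Q`:
    (hEQ₁ : EQ * (Qᵀ * F₀ * Q) = Q) (hEQ₂ : (Qᵀ * F₀ * Q) * EQ = Q)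
    (hEQ₃ : Q * EQ = EQ) (hEQ₄ : EQ * Qᵀ = EQ) :
    ∃ C > 0, ∃ ε₀ > 0, ∀ ε : ℝ, 0 < ε → ε < ε₀ →
      IsUnit (F₀ + ε • D) ∧
      ‖(F₀ + ε • D)⁻¹ -
        ((1 / ε) • EP + (1 - EP * D) * EQ * (1 - D * EP))‖ ≤ C * ε := by
  -- rule out the trivial case `n = 0`
  rcases Nat.eq_zero_or_pos n with hn | hn
  · subst hn
    haveI : Subsingleton (Matrix (Fin 0) (Fin 0) ℝ) :=
      ⟨fun a b => by ext i j; exact i.elim0⟩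
    exact absurd (isUnit_of_subsingleton F₀) hF₀sing
  haveI : Nonempty (Fin n) := Fin.pos_iff_nonempty.mp hn
  -- basic algebraic facts
  have hFP : F₀ * P = 0 := by
    ext i j
    have h0 : F₀ *ᵥ (P *ᵥ Pi.single j (1:ℝ)) = 0 := by
      rw [hker, Matrix.mulVec_mulVec, hPproj]
    rw [Matrix.mulVec_mulVec] at h0
    have := congrFun h0 i
    simpa using this
  have hPF : P * F₀ = 0 := by
    have := congrArg Matrix.transpose hFP
    rwa [Matrix.transpose_mul, hPsym, hF₀sym.eq, Matrix.transpose_zero] at this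
  have hQt : Qᵀ = Q := by rw [hQ, Matrix.transpose_sub, Matrix.transpose_one, hPsym]
  have hFQ : F₀ * Q = F₀ := by rw [hQ, mul_sub, mul_one, hFP, sub_zero]
  have hQF : Q * F₀ = F₀ := by rw [hQ, sub_mul, one_mul, hPF, sub_zero]
  have hEPP : EP * P = EP := by rw [← hPsym]; exact hEP₄
  have hFEQ : F₀ * EQ = Q := by
    have h := hEQ₂
    rwa [hQt, hQF, hFQ] at h
  have hEPDP : EP * D * P = P := by
    have h := hEP₁
    rw [hPsym] at h
    rw [← hEPP, mul_assoc EP P D, mul_assoc EP (P * D) P]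
    exact h
  have hPDEP : P * D * EP = P := by
    have h := hEP₂
    rw [hPsym] at h
    rw [← hEP₃, ← mul_assoc]
    exact h
  have hFEP : F₀ * EP = 0 := by rw [← hEP₃, ← mul_assoc, hFP, zero_mul]
  have hEPDEP : EP * D * EP = EP := by
    calc EP * D * EP = EP * D * (P * EP) := by rw [hEP₃]
    _ = EP * D * P * EP := by rw [← mul_assoc]
    _ = P * EP := by rw [hEPDP]
    _ = EP := hEP₃
  -- abbreviations
  set B := (1 - EP * D) * EQ * (1 - D * EP) with hB
  set M := D * B with hM
  have hFB : F₀ * B = Q - Q * (D * EP) := by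
    have h1 : F₀ * (1 - EP * D) = F₀ := by
      rw [mul_sub, mul_one, ← mul_assoc, hFEP, zero_mul, sub_zero]
    calc F₀ * B = F₀ * (1 - EP * D) * EQ * (1 - D * EP) := by
          rw [hB, ← mul_assoc, ← mul_assoc]
    _ = Q * (1 - D * EP) := by rw [h1, hFEQ]
    _ = Q - Q * (D * EP) := by rw [mul_sub, mul_one]
  have hPDEP' : P * (D * EP) = P := by rw [← mul_assoc]; exact hPDEP
  have key1 : F₀ * B + D * EP = 1 := by
    rw [hFB, hQ, sub_mul, one_mul, hPDEP']
    abel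
  have key2 : EP * M = 0 := by
    have h2 : EP * D * (1 - EP * D) = 0 := by
      rw [mul_sub, mul_one, ← mul_assoc, hEPDEP, sub_self]
    rw [hM, hB, ← mul_assoc, ← mul_assoc, ← mul_assoc, h2, zero_mul, zero_mul]
  -- choose constants
  refine ⟨2 * ‖B * M‖ + 1, by positivity, 1 / (2 * (‖M‖ + 1)), by positivity, ?_⟩
  intro ε hε hε'
  have hMnn : (0:ℝ) ≤ ‖M‖ := norm_nonneg _
  have hsmall : ‖ε • M‖ < 1 / 2 := by
    rw [norm_smul, Real.norm_eq_abs, abs_of_pos hε]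
    have h1 : ε * (‖M‖ + 1) < 1 / 2 := by
      calc ε * (‖M‖ + 1) < (1 / (2 * (‖M‖ + 1))) * (‖M‖ + 1) :=
            mul_lt_mul_of_pos_right hε' (by positivity)
      _ = 1 / 2 := by field_simp
    nlinarith
  have hlt1 : ‖-(ε • M)‖ < 1 := by rw [norm_neg]; linarith
  set u : (Matrix (Fin n) (Fin n) ℝ)ˣ := Units.oneSub (-(ε • M)) hlt1 with hudef
  have huval : (↑u : Matrix (Fin n) (Fin n) ℝ) = 1 + ε • M := by
    rw [hudef, Units.val_oneSub, sub_neg_eq_add]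
  set X := (1 / ε) • EP + B with hX
  have hεne : ε ≠ 0 := ne_of_gt hε
  obtain ⟨V, hV⟩ : ∃ V, ((u⁻¹ : (Matrix (Fin n) (Fin n) ℝ)ˣ) : Matrix (Fin n) (Fin n) ℝ) = V :=
    ⟨_, rfl⟩
  have hAX : (F₀ + ε • D) * X = ↑u := by
    have e1 : F₀ * ((1 / ε) • EP) = 0 := by rw [mul_smul_comm, hFEP, smul_zero]
    have e2 : (ε • D) * ((1 / ε) • EP) = D * EP := by
      rw [smul_mul_assoc, mul_smul_comm, smul_smul, mul_one_div_cancel hεne, one_smul]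
    have e3 : (ε • D) * B = ε • M := by rw [smul_mul_assoc, hM]
    rw [huval, hX, add_mul, mul_add, mul_add, e1, e2, e3, zero_add, ← add_assoc, key1]
  have hVmul : V + (ε • M) * V = 1 := by
    have h := u.mul_inv
    rw [hV, huval, add_mul, one_mul] at h
    exact h
  have hright : (F₀ + ε • D) * (X * V) = 1 := by
    rw [← mul_assoc, hAX, ← hV]
    exact u.mul_inv
  have hunit : IsUnit (F₀ + ε • D) := (Matrix.isUnit_iff_isUnit_det _).mpr (Matrix.isUnit_det_of_right_inverse hright)
  refine ⟨hunit, ?_⟩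
  have hinv : (F₀ + ε • D)⁻¹ = X * V := Matrix.inv_eq_right_inv hright
  have huinv : V = 1 - (ε • M) * V := eq_sub_of_add_eq hVmul
  have hVnorm : ‖V‖ ≤ 2 := by
    have h2 := norm_mul_le (ε • M) V
    have h3 : ‖(1 : Matrix (Fin n) (Fin n) ℝ)‖ = 1 := norm_one
    have h1 : ‖V‖ ≤ 1 + ‖ε • M‖ * ‖V‖ := by
      calc ‖V‖ = ‖1 - (ε • M) * V‖ := by rw [← huinv]
      _ ≤ ‖(1 : Matrix (Fin n) (Fin n) ℝ)‖ + ‖(ε • M) * V‖ := norm_sub_le _ _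
      _ ≤ 1 + ‖ε • M‖ * ‖V‖ := by rw [h3]; linarith
    nlinarith [norm_nonneg V]
  have hXM : X * M = B * M := by
    rw [hX, add_mul, smul_mul_assoc, key2, smul_zero, zero_add]
  have hdiff : (F₀ + ε • D)⁻¹ - X = -(ε • (B * M * V)) := by
    rw [hinv]
    calc X * V - X = X * (V - 1) := by rw [mul_sub, mul_one]
    _ = X * (-((ε • M) * V)) := by
        congr 1
        nth_rewrite 1 [huinv]
        abel
    _ = -(ε • (B * M * V)) := by
        rw [mul_neg, ← mul_assoc, mul_smul_comm, hXM, smul_mul_assoc]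
  calc ‖(F₀ + ε • D)⁻¹ - X‖ = ε * ‖B * M * V‖ := by
        rw [hdiff, norm_neg, norm_smul, Real.norm_eq_abs, abs_of_pos hε]
  _ ≤ ε * (‖B * M‖ * ‖V‖) := mul_le_mul_of_nonneg_left (norm_mul_le _ _) hε.le
  _ ≤ ε * (‖B * M‖ * 2) := by gcongr
  _ ≤ (2 * ‖B * M‖ + 1) * ε := by nlinarith [norm_nonneg (B * M)]
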